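/- In the starting Latin cube L of order n=2t, fix a symbol b and let B1 be the set of (row, file)-coordinate pairs (i,k) with L(i,1,k) = b. Then for every column layer j, all cells (i,j,k) with (i,k) ∈ B1 contain the same symbol. -/
import Mathlib


/-- The representative of `x` modulo `t` in `{1, ..., t}`. -/
def rmod (t : ℕ) (x : ℤ) : ℤ := (x - 1) % t + 1

/-- The starting Latin cube of order `2*t`. -/
def SLC (t : ℕ) (i j k : ℤ) : ℤ :=
  if (i ≤ t ∧ j ≤ t ∧ k ≤ t) ∨ ((t:ℤ) < i ∧ (t:ℤ) < k ∧ j ≤ t) then rmod t (j - i + k)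
  else if ((t:ℤ) < i ∧ (t:ℤ) < j ∧ k ≤ t) ∨ ((t:ℤ) < j ∧ (t:ℤ) < k ∧ i ≤ t) then rmod t (i - j + k)
  else if (i ≤ t ∧ k ≤ t ∧ (t:ℤ) < j) ∨ ((t:ℤ) < i ∧ (t:ℤ) < j ∧ (t:ℤ) < k) then rmod t (j - i + k) + t
  else rmod t (i - j + k) + t

lemma rmod_congr (t : ℕ) {x y : ℤ} (h : (t:ℤ) ∣ x - y) : rmod t x = rmod t y := by
  unfold rmod
  have : (x - 1) % t = (y - 1) % t := by
    rw [Int.emod_eq_emod_iff_emod_sub_eq_zero]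
    have e : x - 1 - (y - 1) = x - y := by ring
    rw [e, Int.emod_eq_zero_of_dvd h]
  omega

lemma rmod_dvd (t : ℕ) {x y : ℤ} (h : rmod t x = rmod t y) : (t:ℤ) ∣ x - y := by
  unfold rmod at h
  have h' : (x - 1) % t = (y - 1) % t := by omega
  rw [Int.emod_eq_emod_iff_emod_sub_eq_zero] at h'
  have e : x - 1 - (y - 1) = x - y := by ring
  rw [e] at h'
  exact Int.dvd_of_emod_eq_zero h' 

lemma rmod_bounds (t : ℕ) (ht : 1 ≤ t) (x : ℤ) : 1 ≤ rmod t x ∧ rmod t x ≤ t := by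
  unfold rmod
  have h0 : (0:ℤ) < t := by exact_mod_cast ht
  have := Int.emod_nonneg (x - 1) (by omega : (t:ℤ) ≠ 0)
  have := Int.emod_lt_of_pos (x - 1) h0
  omega

lemma SLC_cases (t : ℕ) (i j k : ℤ) :
    SLC t i j k =
      if ((i ≤ t) ↔ (k ≤ t)) then
        (if j ≤ t then rmod t (j - i + k) else rmod t (j - i + k) + t)
      else
        (if j ≤ t then rmod t (i - j + k) + t else rmod t (i - j + k)) := by
  unfold SLC
  split_ifs <;> first | rfl | (exfalso; omega)

/-- In the starting Latin cube of order `n = 2t`: fix a symbol `b`, and let `B₁` be the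
set of (row,file) pairs `(i,k)` with `L(i,1,k) = b`. Then for every column layer `j`,
all cells `(i,j,k)` with `(i,k) ∈ B₁` contain the same symbol. -/
theorem starting_latin_cube_symbol_column_block (t : ℕ) (ht : 1 ≤ t)
    (b : ℤ) (hb : b ∈ Finset.Icc (1:ℤ) (2*t)) :
    ∀ j ∈ Finset.Icc (1:ℤ) (2*t),
      ∀ i ∈ Finset.Icc (1:ℤ) (2*t), ∀ k ∈ Finset.Icc (1:ℤ) (2*t),
      ∀ i' ∈ Finset.Icc (1:ℤ) (2*t), ∀ k' ∈ Finset.Icc (1:ℤ) (2*t),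
      SLC t i 1 k = b → SLC t i' 1 k' = b → SLC t i j k = SLC t i' j k' := by
  intro j hj i hi k hk i' hi' k' hk' h1 h2
  have h1t : (1:ℤ) ≤ t := by exact_mod_cast ht
  rw [SLC_cases] at h1 h2 ⊢
  rw [SLC_cases (t := t) (i := i') (j := j) (k := k')]
  have B1 := rmod_bounds t ht (1 - i + k)
  have B2 := rmod_bounds t ht (1 - i' + k')
  have B3 := rmod_bounds t ht (i - 1 + k)
  have B4 := rmod_bounds t ht (i' - 1 + k')
  by_cases c1 : (i ≤ (t:ℤ)) ↔ (k ≤ (t:ℤ)) <;> by_cases c2 : (i' ≤ (t:ℤ)) ↔ (k' ≤ (t:ℤ))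
  · -- both same side
    simp only [if_pos c1, if_pos c2, if_pos h1t] at h1 h2 ⊢
    have hd : (t:ℤ) ∣ (1 - i + k) - (1 - i' + k') := by
      exact rmod_dvd t (by omega)
    have : (t:ℤ) ∣ (j - i + k) - (j - i' + k') := by
      have e : (j - i + k) - (j - i' + k') = (1 - i + k) - (1 - i' + k') := by ring
      rw [e]; exact hd
    have := rmod_congr t this
    split_ifs <;> omega
  · simp only [if_pos c1, if_neg c2, if_pos h1t] at h1 h2
    omega
  · simp only [if_neg c1, if_pos c2, if_pos h1t] at h1 h2
    omega
  · simp only [if_neg c1, if_neg c2, if_pos h1t] at h1 h2 ⊢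
    have hd : (t:ℤ) ∣ (i - 1 + k) - (i' - 1 + k') := by
      exact rmod_dvd t (by omega)
    have : (t:ℤ) ∣ (i - j + k) - (i' - j + k') := by
      have e : (i - j + k) - (i' - j + k') = (i - 1 + k) - (i' - 1 + k') := by ring
      rw [e]; exact hd
    have := rmod_congr t this
    split_ifs <;> omega
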